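/- arXiv:2505.07131 — 7 statements merged into one kernel-verified Lean document; each statement's English description precedes it below -/
import Mathlib

section
/- Let E be a category with finite limits, (M, ∧, ⊤) an internal meet-semilattice, and μ = (μ_X : X → M) a family of maps satisfying the product property (μ_{X×Y} = ∧ ∘ (μ_X × μ_Y) for all X, Y). If every split monomorphism is non-singular with respect to μ, then μ is a lax cocone: for every morphism f : X → Y, μ_X ≤ μ_Y ∘ f. -/
open CategoryTheory CategoryTheory.Limits

universe v u

namespace Gauge

/-- An internal meet-semilattice `(M, ∧, ⊤)` in a finitely complete category. -/
structure InternalMeetSemilattice (E : Type u) [Category.{v} E] [HasFiniteLimits E] where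
  M : E
  meet : M ⨯ M ⟶ M
  top : ⊤_ E ⟶ M
  comm : (prod.braiding M M).hom ≫ meet = meet
  assoc : (prod.associator M M M).hom ≫ prod.map (𝟙 M) meet ≫ meet = prod.map meet (𝟙 M) ≫ meet
  idem : prod.lift (𝟙 M) (𝟙 M) ≫ meet = 𝟙 M
  unit : prod.lift (terminal.from M ≫ top) (𝟙 M) ≫ meet = 𝟙 M

variable {E : Type u} [Category.{v} E] [HasFiniteLimits E]

/-- The partial order induced on maps into `M`: `f ≤ g` iff `f ∧ g = f`. -/
def InternalMeetSemilattice.le (L : InternalMeetSemilattice E) {X : E} (f g : X ⟶ L.M) : Prop :=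
  prod.lift f g ≫ L.meet = f

/-- A map `f : X ⟶ Y` is non-singular w.r.t. the family `μ` if `μ_Y ∘ f = μ_X`. -/
def NonSingular (L : InternalMeetSemilattice E) (μ : ∀ X : E, X ⟶ L.M)
    {X Y : E} (f : X ⟶ Y) : Prop :=
  f ≫ μ Y = μ X

/-- The family `μ` is a lax cocone if `μ_X ≤ μ_Y ∘ f` for every `f : X ⟶ Y`. -/
def LaxCocone (L : InternalMeetSemilattice E) (μ : ∀ X : E, X ⟶ L.M) : Prop :=
  ∀ {X Y : E} (f : X ⟶ Y), L.le (μ X) (f ≫ μ Y)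

/-- The product property: `μ_{X × Y} = ∧ ∘ (μ_X × μ_Y)`. -/
def ProductProperty (L : InternalMeetSemilattice E) (μ : ∀ X : E, X ⟶ L.M) : Prop :=
  ∀ X Y : E, prod.map (μ X) (μ Y) ≫ L.meet = μ (X ⨯ Y)

/-- if `μ` satisfies the product property and every split monomorphism
is non-singular, then `μ` is a lax cocone. -/
theorem stmt3 {E : Type u} [Category.{v} E] [HasFiniteLimits E]
    (L : InternalMeetSemilattice E) (μ : ∀ X : E, X ⟶ L.M)
    (hprod : ProductProperty L μ)
    (hsplit : ∀ {X Y : E} (m : X ⟶ Y), IsSplitMono m → NonSingular L μ m) :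
    LaxCocone L μ := by
  intro X Y f
  have hm : IsSplitMono (prod.lift (𝟙 X) f) :=
    ⟨⟨⟨(prod.fst : X ⨯ Y ⟶ X), prod.lift_fst _ _⟩⟩⟩
  have hns := hsplit (prod.lift (𝟙 X) f) hm
  unfold NonSingular at hns
  rw [← hprod X Y, ← Category.assoc, prod.lift_map] at hns
  simpa [InternalMeetSemilattice.le, Category.id_comp] using hns

end Gauge
end

section
/- Let E be a finitely complete category with a meet-semilattice (M, ∧, ⊤) and a lax cocone μ = (μ_X : X → M) such that every regular monomorphism is non-singular. Then for each object Y, the full subcategory N_μ(Y) of the slice category E/Y consisting of non-singular maps with codomain Y is coreflective in E/Y, and the counit of the coreflection is a regular monomorphism. Explicitly, the coreflection of f : X → Y is f ∘ β_X : X' → Y where β_X : X' → X is the equalizer of μ_X and μ_Y ∘ f. -/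
open CategoryTheory CategoryTheory.Limits

universe v u

namespace Gauge

variable {E : Type u} [Category.{v} E] [HasFiniteLimits E]

/-- Antisymmetry of the induced order. -/
lemma le_antisymm' (L : InternalMeetSemilattice E) {X : E} {a b : X ⟶ L.M}
    (h1 : L.le a b) (h2 : L.le b a) : a = b := by
  have hswap : prod.lift b a ≫ (prod.braiding L.M L.M).hom = prod.lift a b := by
    apply Limits.prod.hom_ext <;> simp <;> simp only [prod.lift_fst, prod.lift_snd]
  have : prod.lift a b ≫ L.meet = prod.lift b a ≫ L.meet := by
    rw [← hswap, Category.assoc, L.comm]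
  calc a = prod.lift a b ≫ L.meet := h1.symm
  _ = prod.lift b a ≫ L.meet := this
  _ = b := h2

/-- The order is stable under precomposition. -/
lemma le_precomp (L : InternalMeetSemilattice E) {W X : E} {a b : X ⟶ L.M}
    (g : W ⟶ X) (h : L.le a b) : L.le (g ≫ a) (g ≫ b) := by
  unfold InternalMeetSemilattice.le at h ⊢
  rw [← prod.comp_lift, Category.assoc, h]

/-- Key lemma: if `g ≫ f` is non-singular, then `g` equalizes `μ X` and `f ≫ μ Y`. -/
lemma eq_of_comp_nonSingular (L : InternalMeetSemilattice E) (μ : ∀ X : E, X ⟶ L.M)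
    (hlax : LaxCocone L μ) {W X Y : E} (f : X ⟶ Y) (g : W ⟶ X)
    (h : NonSingular L μ (g ≫ f)) : g ≫ μ X = g ≫ f ≫ μ Y := by
  have hW : g ≫ f ≫ μ Y = μ W := by
    rw [← Category.assoc]; exact h
  rw [hW]
  refine le_antisymm' L ?_ (hlax g)
  have := le_precomp L g (hlax f)
  rwa [hW] at this

/-- if every regular monomorphism is non-singular, then the full
subcategory of `E/Y` on non-singular maps is coreflective, the coreflection of
`f : X ⟶ Y` being `f ∘ β_X` where `β_X` is the equalizer of `μ_X` and `μ_Y ∘ f`;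
the counit of the coreflection is a regular monomorphism. -/
theorem stmt4 {E : Type u} [Category.{v} E] [HasFiniteLimits E]
    (L : InternalMeetSemilattice E) (μ : ∀ X : E, X ⟶ L.M) (hlax : LaxCocone L μ)
    (hreg : ∀ {X Y : E} (m : X ⟶ Y), RegularMono m → NonSingular L μ m) (Y : E) :
    (ObjectProperty.ι (fun f : Over Y => NonSingular L μ f.hom)).IsLeftAdjoint
    ∧ ∀ f : Over Y,
        NonSingular L μ (equalizer.ι (μ f.left) (f.hom ≫ μ Y) ≫ f.hom)
        ∧ Nonempty (RegularMono (equalizer.ι (μ f.left) (f.hom ≫ μ Y)))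
        ∧ ∀ {W : E} (g : W ⟶ f.left), NonSingular L μ (g ≫ f.hom) →
            ∃! t : W ⟶ equalizer (μ f.left) (f.hom ≫ μ Y),
              t ≫ equalizer.ι (μ f.left) (f.hom ≫ μ Y) = g := by
  -- the coreflection is non-singular
  have hns : ∀ f : Over Y, NonSingular L μ (equalizer.ι (μ f.left) (f.hom ≫ μ Y) ≫ f.hom) := by
    intro f
    have hι : NonSingular L μ (equalizer.ι (μ f.left) (f.hom ≫ μ Y)) :=
      hreg _ (RegularMono.equalizer _ _)
    show (equalizer.ι (μ f.left) (f.hom ≫ μ Y) ≫ f.hom) ≫ μ Y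
      = μ (equalizer (μ f.left) (f.hom ≫ μ Y))
    rw [Category.assoc, ← equalizer.condition (μ f.left) (f.hom ≫ μ Y)]
    exact hι
  constructor
  · -- coreflectivity
    set P := fun f : Over Y => NonSingular L μ f.hom with hP
    let Gobj : Over Y → ObjectProperty.FullSubcategory P := fun f =>
      ⟨Over.mk (equalizer.ι (μ f.left) (f.hom ≫ μ Y) ≫ f.hom), hns f⟩
    let e : ∀ (A : ObjectProperty.FullSubcategory P) (f : Over Y),
        ((ObjectProperty.ι P).obj A ⟶ f) ≃ (A ⟶ Gobj f) :=
      fun A f =>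
      { toFun := fun g => ObjectProperty.homMk (
          Over.homMk (equalizer.lift g.left (by
            refine eq_of_comp_nonSingular L μ hlax f.hom g.left ?_
            have hw : g.left ≫ f.hom = A.obj.hom := Over.w g
            show (g.left ≫ f.hom) ≫ μ Y = μ A.obj.left
            rw [hw]
            exact A.property))
            (by simp [Gobj]))
        invFun := fun h =>
          Over.homMk (h.hom.left ≫ equalizer.ι (μ f.left) (f.hom ≫ μ Y)) (by
            have := Over.w h.hom
            simpa [Gobj] using this)
        left_inv := fun g => by
          apply Over.OverMorphism.ext
          simp
        right_inv := fun h => by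
          apply ObjectProperty.hom_ext
          apply Over.OverMorphism.ext
          apply equalizer.hom_ext
          simp }
    have he : ∀ (A' A : ObjectProperty.FullSubcategory P) (f : Over Y) (k : A' ⟶ A)
        (g : (ObjectProperty.ι P).obj A ⟶ f),
        e A' f ((ObjectProperty.ι P).map k ≫ g) = k ≫ e A f g := by
      intro A' A f k g
      apply ObjectProperty.hom_ext
      apply Over.OverMorphism.ext
      apply equalizer.hom_ext
      show equalizer.lift ((ObjectProperty.ι P).map k ≫ g).left _
            ≫ equalizer.ι (μ f.left) (f.hom ≫ μ Y)
        = (k.hom.left ≫ equalizer.lift g.left _) ≫ equalizer.ι (μ f.left) (f.hom ≫ μ Y)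
      rw [equalizer.lift_ι, Category.assoc, equalizer.lift_ι]
      rfl
    exact ⟨_, ⟨Adjunction.adjunctionOfEquivRight e he⟩⟩
  · intro f
    refine ⟨hns f, ⟨RegularMono.equalizer _ _⟩, ?_⟩
    intro W g hg
    have key := eq_of_comp_nonSingular L μ hlax f.hom g hg
    refine ⟨equalizer.lift g key, equalizer.lift_ι _ _, ?_⟩
    intro t ht
    apply equalizer.hom_ext
    simp [ht]

end Gauge
end

section
/- Let E be a finitely complete category with an internal meet-semilattice (M, ∧, ⊤), and μ = (μ_X : X → M) a lax cocone satisfying the product property and such that all regular monomorphisms are non-singular. Then non-singular maps are closed under pullback: if f : X → Y is non-singular and the square with sides h : P → X, k : P → W, f : X → Y, g : W → Y is a pullback, then k is non-singular. -/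
open CategoryTheory CategoryTheory.Limits

universe v u

namespace Gauge

variable {E : Type u} [Category.{v} E] [HasFiniteLimits E]

/-- non-singular maps are closed under pullback. -/
theorem stmt5 {E : Type u} [Category.{v} E] [HasFiniteLimits E]
    (L : InternalMeetSemilattice E) (μ : ∀ X : E, X ⟶ L.M)
    (hlax : LaxCocone L μ) (hprod : ProductProperty L μ)
    (hreg : ∀ {X Y : E} (m : X ⟶ Y), RegularMono m → NonSingular L μ m)
    {P W X Y : E} (f : X ⟶ Y) (g : W ⟶ Y) (h : P ⟶ X) (k : P ⟶ W)
    (hpb : IsPullback h k f g) (hf : NonSingular L μ f) :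
    NonSingular L μ k := by
  -- The pairing ⟨h, k⟩ : P ⟶ X ⨯ W is a regular mono (equalizer of fst≫f and snd≫g).
  have hw : prod.lift h k ≫ (prod.fst ≫ f) = prod.lift h k ≫ (prod.snd ≫ g) := by
    rw [← Category.assoc, ← Category.assoc, prod.lift_fst, prod.lift_snd, hpb.w]
  have hrm : RegularMono (prod.lift h k) :=
    { Z := Y
      left := prod.fst ≫ f
      right := prod.snd ≫ g
      w := hw
      isLimit := Fork.IsLimit.mk' _ (fun s => by
        have hs : (s.ι ≫ prod.fst) ≫ f = (s.ι ≫ prod.snd) ≫ g := by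
          simpa using s.condition
        refine ⟨hpb.lift (s.ι ≫ prod.fst) (s.ι ≫ prod.snd) hs, ?_, ?_⟩
        · apply Limits.prod.hom_ext
          · simp; rw [prod.lift_fst]
          · simp; rw [prod.lift_snd]
        · intro m hm
          apply hpb.hom_ext
          · have := congrArg (· ≫ prod.fst) hm
            simp at this; rw [prod.lift_fst] at this; simpa using this
          · have := congrArg (· ≫ prod.snd) hm
            simp at this; rw [prod.lift_snd] at this; simpa using this) }
  have hns : prod.lift h k ≫ μ (X ⨯ W) = μ P := hreg _ hrm
  have hhx : h ≫ μ X = k ≫ (g ≫ μ Y) := by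
    rw [← hf, ← Category.assoc, ← Category.assoc, hpb.w]
  have key : μ P = prod.lift (k ≫ μ W) (k ≫ (g ≫ μ Y)) ≫ L.meet := by
    rw [← hns, ← hprod X W, ← Category.assoc, prod.lift_map, hhx]
    have hb : prod.lift (k ≫ μ W) (k ≫ (g ≫ μ Y)) ≫ (prod.braiding L.M L.M).hom
        = prod.lift (k ≫ (g ≫ μ Y)) (k ≫ μ W) := by
      apply Limits.prod.hom_ext
      · simp; rw [prod.lift_fst, prod.lift_fst, prod.lift_snd]
      · simp; rw [prod.lift_snd, prod.lift_snd, prod.lift_fst]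
    rw [← hb, Category.assoc, L.comm]
  have hlaxW : prod.lift (μ W) (g ≫ μ Y) ≫ L.meet = μ W := hlax g
  unfold NonSingular
  calc k ≫ μ W = k ≫ prod.lift (μ W) (g ≫ μ Y) ≫ L.meet := by rw [hlaxW]
    _ = (k ≫ prod.lift (μ W) (g ≫ μ Y)) ≫ L.meet := by rw [Category.assoc]
    _ = prod.lift (k ≫ μ W) (k ≫ (g ≫ μ Y)) ≫ L.meet := by rw [prod.comp_lift]
    _ = μ P := key.symm

end Gauge
end

section
/- Let C be a small category and P a probe in C. For each presheaf X, define Sk_P(X)(C) ⊆ X(C) to be the set of P-singular figures of sort C. Then Sk_P(X) is a subpresheaf of X, the inclusion sk_{P,X} : Sk_P(X) → X is an isomorphism if and only if every figure of X is P-singular, and the family (sk_{P,X})_{X ∈ Psh(C)} is a coherent family of monomorphisms: for every mono ψ : X → Y of presheaves, Sk_P(X) is the pullback of Sk_P(Y) ↪ Y along ψ. -/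
open CategoryTheory Opposite

universe u

namespace ProbeTheory

variable {C : Type u} [SmallCategory C]

/-- An equivalence relation on an object `c` of `C`: for each `d`, a relation on
parallel pairs `d ⟶ c`, reflexive, symmetric, transitive, and closed under
precomposition with arbitrary morphisms. -/
structure EqRel (c : C) where
  rel : ∀ d : C, (d ⟶ c) → (d ⟶ c) → Prop
  refl : ∀ (d : C) (t : d ⟶ c), rel d t t
  symm : ∀ (d : C) (t₁ t₂ : d ⟶ c), rel d t₁ t₂ → rel d t₂ t₁
  trans : ∀ (d : C) (t₁ t₂ t₃ : d ⟶ c), rel d t₁ t₂ → rel d t₂ t₃ → rel d t₁ t₃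
  comp : ∀ (d' d : C) (g : d' ⟶ d) (t₁ t₂ : d ⟶ c), rel d t₁ t₂ → rel d' (g ≫ t₁) (g ≫ t₂)

theorem EqRel.ext' {c : C} {e e' : EqRel c}
    (h : ∀ (d : C) (t₁ t₂ : d ⟶ c), e.rel d t₁ t₂ ↔ e'.rel d t₁ t₂) : e = e' := by
  cases e; cases e'
  simp only [EqRel.mk.injEq]
  funext d t₁ t₂
  exact propext (h d t₁ t₂)

/-- The restriction `e·f` of an equivalence relation along `f : b ⟶ c`. -/
def EqRel.restrict {b c : C} (e : EqRel c) (f : b ⟶ c) : EqRel b where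
  rel d g₁ g₂ := e.rel d (g₁ ≫ f) (g₂ ≫ f)
  refl d t := e.refl d _
  symm d t₁ t₂ h := e.symm d _ _ h
  trans d t₁ t₂ t₃ h h' := e.trans d _ _ _ h h'
  comp d' d g t₁ t₂ h := by
    simp only [Category.assoc]
    exact e.comp d' d g _ _ h

/-- Containment of equivalence relations. -/
def EqRel.le {c : C} (e e' : EqRel c) : Prop :=
  ∀ (d : C) (t₁ t₂ : d ⟶ c), e.rel d t₁ t₂ → e'.rel d t₁ t₂

/-- A probe: a set of equivalence relations on each object, stable under restriction. -/
structure Probe (C : Type u) [SmallCategory C] where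
  P : ∀ c : C, Set (EqRel c)
  restrict_mem : ∀ ⦃b c : C⦄ (f : b ⟶ c) ⦃e : EqRel c⦄, e ∈ P c → e.restrict f ∈ P b

/-- A probe is saturated if each `P c` is upward closed. -/
def Probe.Saturated (Pr : Probe C) : Prop :=
  ∀ ⦃c : C⦄ ⦃e e' : EqRel c⦄, e ∈ Pr.P c → e.le e' → e' ∈ Pr.P c

/-- The kernel of a figure `x ∈ X(c)`. -/
def figureKernel {X : Cᵒᵖ ⥤ Type u} {c : C} (x : X.obj (op c)) : EqRel c where
  rel d t₁ t₂ := X.map t₁.op x = X.map t₂.op x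
  refl _ _ := rfl
  symm _ _ _ h := h.symm
  trans _ _ _ _ h h' := h.trans h'
  comp d' d g t₁ t₂ h := by
    show X.map (g ≫ t₁).op x = X.map (g ≫ t₂).op x
    rw [op_comp, op_comp, FunctorToTypes.map_comp_apply, FunctorToTypes.map_comp_apply, h]

theorem figureKernel_map {X : Cᵒᵖ ⥤ Type u} {b c : C} (f : b ⟶ c) (x : X.obj (op c)) :
    figureKernel (X.map f.op x) = (figureKernel x).restrict f := by
  apply EqRel.ext'
  intro d t₁ t₂
  show (X.map t₁.op (X.map f.op x) = X.map t₂.op (X.map f.op x)) ↔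
    (X.map (t₁ ≫ f).op x = X.map (t₂ ≫ f).op x)
  rw [op_comp, op_comp, FunctorToTypes.map_comp_apply, FunctorToTypes.map_comp_apply]

/-- A figure `x ∈ X(c)` is `P`-singular if its kernel belongs to `P c`. -/
def Singular (Pr : Probe C) {X : Cᵒᵖ ⥤ Type u} {c : C} (x : X.obj (op c)) : Prop :=
  figureKernel x ∈ Pr.P c

/-- The subpresheaf of `P`-singular figures. -/
def skSub (Pr : Probe C) (X : Cᵒᵖ ⥤ Type u) : Subfunctor X where
  obj d := {x : X.obj d | Singular Pr (X := X) (c := d.unop) x}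
  map {d d'} i x hx := by
    show Singular Pr (X.map i x)
    have h : figureKernel (X := X) (X.map (i.unop).op x) = (figureKernel x).restrict i.unop :=
      figureKernel_map i.unop x
    show figureKernel (X.map i x) ∈ Pr.P d'.unop
    rw [show (X.map i x) = (X.map (i.unop).op x) from rfl, h]
    exact Pr.restrict_mem i.unop hx

/-- `Sk_P X` is a subpresheaf of `X` (by construction, via `skSub`);
its inclusion is an isomorphism iff every figure of `X` is `P`-singular; and the
family of inclusions is coherent: for every mono `ψ : X ⟶ Y`, `Sk_P X` is the
pullback (preimage) of `Sk_P Y` along `ψ`. -/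
theorem stmt10 (Pr : Probe C) :
    (∀ X : Cᵒᵖ ⥤ Type u,
        (IsIso (skSub Pr X).ι ↔ ∀ (c : C) (x : X.obj (op c)), Singular Pr x))
    ∧ (∀ (X Y : Cᵒᵖ ⥤ Type u) (ψ : X ⟶ Y), Mono ψ →
        ∀ (c : C) (x : X.obj (op c)), (Singular Pr x ↔ Singular Pr (ψ.app (op c) x))) := by
  constructor
  · intro X
    constructor
    · intro h c x
      have : Function.Surjective ((skSub Pr X).ι.app (op c)) :=
        (isIso_iff_bijective ((skSub Pr X).ι.app (op c))).mp inferInstance |>.2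
      obtain ⟨⟨y, hy⟩, rfl⟩ := this x
      exact hy
    · intro h
      have : ∀ d, IsIso ((skSub Pr X).ι.app d) := by
        intro d
        rw [isIso_iff_bijective]
        refine ⟨fun a b hab => Subtype.ext hab, fun x => ⟨⟨x, h d.unop x⟩, rfl⟩⟩
      exact NatIso.isIso_of_isIso_app _
  · intro X Y ψ hψ c x
    have hinj : Function.Injective (ψ.app (op c)) := by
      haveI := hψ
      rw [← mono_iff_injective]
      exact (NatTrans.mono_iff_mono_app ψ).mp hψ (op c)
    have hker : figureKernel (ψ.app (op c) x) = figureKernel x := by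
      apply EqRel.ext'
      intro d t₁ t₂
      show Y.map t₁.op (ψ.app (op c) x) = Y.map t₂.op (ψ.app (op c) x) ↔
        X.map t₁.op x = X.map t₂.op x
      rw [← FunctorToTypes.naturality, ← FunctorToTypes.naturality]
      constructor
      · intro h
        have hinj' : Function.Injective (ψ.app (op d)) := by
          rw [← mono_iff_injective]
          exact (NatTrans.mono_iff_mono_app ψ).mp hψ (op d)
        exact hinj' h
      · intro h; rw [h]
    unfold Singular
    rw [hker]


end ProbeTheory
end

section
/- Let C be a small category. If P is a saturated probe in C, then the P-skeleton construction Sk_P, together with the inclusions sk_{P,X} : Sk_P(X) ↪ X, forms a shell on Psh(C): an idempotent comonad whose counit is pointwise monic and whose naturality squares at monomorphisms are pullbacks; moreover its coalgebras are exactly the P-skeletal presheaves (those all of whose figures are P-singular). -/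
open CategoryTheory Opposite

universe u

namespace ProbeTheory

variable {C : Type u} [SmallCategory C]

universe u₁ v₁

/-- A shell: an idempotent comonad with pointwise monic counit whose naturality
squares at monomorphisms are pullbacks. -/
structure Shell (E : Type u₁) [Category.{v₁} E] where
  G : Comonad E
  idem : ∀ X : E, IsIso (G.δ.app X)
  monic : ∀ X : E, Mono (G.ε.app X)
  cart : ∀ {X Y : E} (m : X ⟶ Y), Mono m →
    IsPullback ((G : E ⥤ E).map m) (G.ε.app X) (G.ε.app Y) m

section Stmt11Aux

open Limits

variable (Pr : Probe C)

theorem singular_restrict {X : Cᵒᵖ ⥤ Type u} {b c : C} (f : b ⟶ c) {x : X.obj (op c)}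
    (h : Singular Pr x) : Singular Pr (X.map f.op x) := by
  unfold Singular at h ⊢
  rw [figureKernel_map]
  exact Pr.restrict_mem f h

/-- The subpresheaf of `P`-singular figures. -/
def SkObj (X : Cᵒᵖ ⥤ Type u) : Cᵒᵖ ⥤ Type u where
  obj c := {x : X.obj (op c.unop) // Singular Pr x}
  map {c d} f := TypeCat.ofHom fun x => ⟨X.map f.unop.op x.1, singular_restrict Pr f.unop x.2⟩
  map_id c := by
    refine ConcreteCategory.hom_ext _ _ (fun x => ?_)
    apply Subtype.ext
    show X.map _ x.1 = x.1
    simp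
  map_comp f g := by
    refine ConcreteCategory.hom_ext _ _ (fun x => ?_)
    apply Subtype.ext
    show X.map _ x.1 = X.map _ (X.map _ x.1)
    simp

theorem figureKernel_skObj {X : Cᵒᵖ ⥤ Type u} {c : C} (x : (SkObj Pr X).obj (op c)) :
    figureKernel x = figureKernel x.1 := by
  apply EqRel.ext'
  intro d t₁ t₂
  show ((SkObj Pr X).map t₁.op x = (SkObj Pr X).map t₂.op x) ↔
    (X.map t₁.op x.1 = X.map t₂.op x.1)
  exact Subtype.ext_iff

theorem singular_of_mem {X : Cᵒᵖ ⥤ Type u} {c : C} (x : (SkObj Pr X).obj (op c)) :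
    Singular Pr x := by
  unfold Singular
  rw [figureKernel_skObj]
  exact x.2

theorem singular_app (hsat : Pr.Saturated) {X Y : Cᵒᵖ ⥤ Type u} (f : X ⟶ Y) {c : C}
    {x : X.obj (op c)} (h : Singular Pr x) : Singular Pr (f.app (op c) x) := by
  refine hsat h ?_
  intro d t₁ t₂ ht
  show Y.map t₁.op (f.app _ x) = Y.map t₂.op (f.app _ x)
  rw [← FunctorToTypes.naturality, ← FunctorToTypes.naturality]
  exact congrArg _ ht

theorem singular_of_injective {X Y : Cᵒᵖ ⥤ Type u} (m : X ⟶ Y)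
    (hm : ∀ d : Cᵒᵖ, Function.Injective (m.app d)) {c : C} {x : X.obj (op c)}
    (h : Singular Pr (m.app (op c) x)) : Singular Pr x := by
  have hk : figureKernel x = figureKernel (m.app (op c) x) := by
    apply EqRel.ext'
    intro d t₁ t₂
    show (X.map t₁.op x = X.map t₂.op x) ↔
      (Y.map t₁.op (m.app _ x) = Y.map t₂.op (m.app _ x))
    rw [← FunctorToTypes.naturality, ← FunctorToTypes.naturality]
    exact ⟨fun h => congrArg _ h, fun h => hm _ h⟩
  unfold Singular
  rw [hk]
  exact h

variable (hsat : Pr.Saturated)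

/-- The skeleton functor. -/
def Sk : (Cᵒᵖ ⥤ Type u) ⥤ Cᵒᵖ ⥤ Type u where
  obj X := SkObj Pr X
  map {X Y} f :=
    { app := fun c => TypeCat.ofHom fun x => ⟨f.app c x.1, singular_app Pr hsat f x.2⟩
      naturality := by
        intro c d g
        refine ConcreteCategory.hom_ext _ _ (fun x => ?_)
        apply Subtype.ext
        exact NatTrans.naturality_apply f g.unop.op x.1 }
  map_id X := by
    apply NatTrans.ext; funext c; refine ConcreteCategory.hom_ext _ _ (fun x => ?_)
    apply Subtype.ext; rfl
  map_comp f g := by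
    apply NatTrans.ext; funext c; refine ConcreteCategory.hom_ext _ _ (fun x => ?_)
    apply Subtype.ext; rfl

/-- The skeleton comonad. -/
def SkComonad : Comonad (Cᵒᵖ ⥤ Type u) where
  toFunctor := Sk Pr hsat
  ε :=
    { app := fun X => { app := fun c => TypeCat.ofHom fun x => x.1, naturality := by intros; rfl }
      naturality := by intros; rfl }
  δ :=
    { app := fun X =>
        { app := fun c => TypeCat.ofHom fun x => ⟨x, singular_of_mem Pr x⟩
          naturality := by
            intro c d g
            refine ConcreteCategory.hom_ext _ _ (fun x => ?_)
            apply Subtype.ext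
            rfl }
      naturality := by
        intro X Y f
        apply NatTrans.ext; funext c; refine ConcreteCategory.hom_ext _ _ (fun x => ?_)
        apply Subtype.ext; rfl }
  coassoc X := by
    apply NatTrans.ext; funext c; refine ConcreteCategory.hom_ext _ _ (fun x => ?_)
    apply Subtype.ext; apply Subtype.ext; rfl
  left_counit X := by
    apply NatTrans.ext; funext c; refine ConcreteCategory.hom_ext _ _ (fun x => ?_)
    rfl
  right_counit X := by
    apply NatTrans.ext; funext c; refine ConcreteCategory.hom_ext _ _ (fun x => ?_)
    apply Subtype.ext; rfl

theorem skComonad_mono_app (X : Cᵒᵖ ⥤ Type u) : Mono ((SkComonad Pr hsat).ε.app X) := by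
  rw [NatTrans.mono_iff_mono_app]
  intro k
  rw [mono_iff_injective]
  exact fun a b h => Subtype.ext h

/-- The skeleton shell. -/
def SkShell : Shell (Cᵒᵖ ⥤ Type u) where
  G := SkComonad Pr hsat
  idem X := by
    refine ⟨(SkComonad Pr hsat).ε.app ((Sk Pr hsat).obj X), ?_, ?_⟩
    · apply NatTrans.ext; funext c; refine ConcreteCategory.hom_ext _ _ (fun x => ?_)
      rfl
    · apply NatTrans.ext; funext c; refine ConcreteCategory.hom_ext _ _ (fun x => ?_)
      apply Subtype.ext; rfl
  monic := skComonad_mono_app Pr hsat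
  cart {X Y} m hm := by
    have hinj : ∀ d : Cᵒᵖ, Function.Injective (m.app d) := by
      intro d
      rw [← mono_iff_injective]
      exact (NatTrans.mono_iff_mono_app m).1 hm d
    have comm : (Sk Pr hsat).map m ≫ (SkComonad Pr hsat).ε.app Y =
        (SkComonad Pr hsat).ε.app X ≫ m := by
      apply NatTrans.ext; funext c; refine ConcreteCategory.hom_ext _ _ (fun x => ?_); rfl
    refine IsPullback.of_isLimit (PullbackCone.IsLimit.mk comm
      (fun s => ?_) (fun s => ?_) (fun s => ?_) (fun s l h₁ h₂ => ?_)) <;> try skip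
    · -- the lift
      refine { app := fun c => TypeCat.ofHom fun w => ⟨s.snd.app c w, ?_⟩, naturality := ?_ }
      · have hc : m.app c (s.snd.app c w) = (s.fst.app c w).1 :=
          (ConcreteCategory.congr_hom (congrArg (fun (t : s.pt ⟶ Y) => t.app c) s.condition) w).symm
        refine singular_of_injective Pr m hinj ?_
        show Singular Pr (m.app (op c.unop) (s.snd.app c w))
        rw [show m.app (op c.unop) (s.snd.app c w) = (s.fst.app c w).1 from hc]
        exact (s.fst.app c w).2
      · intro c d g
        refine ConcreteCategory.hom_ext _ _ (fun w => ?_)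
        apply Subtype.ext
        exact NatTrans.naturality_apply s.snd g.unop.op w
    · -- fac_left
      apply NatTrans.ext; funext c; refine ConcreteCategory.hom_ext _ _ (fun w => ?_)
      apply Subtype.ext
      exact (ConcreteCategory.congr_hom (congrArg (fun (t : s.pt ⟶ Y) => t.app c) s.condition) w).symm
    · -- fac_right
      apply NatTrans.ext; funext c; refine ConcreteCategory.hom_ext _ _ (fun w => ?_)
      rfl
    · -- uniqueness
      apply NatTrans.ext; funext c; refine ConcreteCategory.hom_ext _ _ (fun w => ?_)
      apply Subtype.ext
      exact ConcreteCategory.congr_hom (congrArg (fun (t : s.pt ⟶ X) => t.app c) h₂) w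

end Stmt11Aux

/-- for a saturated probe `P`, the `P`-skeleton construction
(the subpresheaves of `P`-singular figures, with their inclusions as counit)
forms a shell on the presheaf topos, whose coalgebras are exactly the
`P`-skeletal presheaves. -/
theorem stmt11 (Pr : Probe C) (hsat : Pr.Saturated) :
    ∃ S : Shell (Cᵒᵖ ⥤ Type u),
      (∀ (X : Cᵒᵖ ⥤ Type u) (c : C) (x : X.obj (op c)),
          (∃ y, (S.G.ε.app X).app (op c) y = x) ↔ Singular Pr x)
      ∧ (∀ X : Cᵒᵖ ⥤ Type u,
          (∃ A : Comonad.Coalgebra S.G, A.A = X) ↔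
            ∀ (c : C) (x : X.obj (op c)), Singular Pr x) := by
  refine ⟨SkShell Pr hsat, fun X c x => ?_, fun X => ?_⟩
  · constructor
    · rintro ⟨y, rfl⟩
      exact y.2
    · intro h
      exact ⟨⟨x, h⟩, rfl⟩
  · constructor
    · rintro ⟨A, rfl⟩ c x
      have h1 : ((A.a.app (op c) x).1 : A.A.obj (op c)) = x :=
        by have := ConcreteCategory.congr_hom (congrArg (fun (t : A.A ⟶ A.A) => t.app (op c)) A.counit) x; exact this
      have := (A.a.app (op c) x).2
      rwa [h1] at this
    · intro h
      refine ⟨{ A := X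
                a := { app := fun c => TypeCat.ofHom fun x => ⟨x, h c.unop x⟩
                       naturality := by
                         intro c d g
                         refine ConcreteCategory.hom_ext _ _ (fun x => ?_)
                         apply Subtype.ext
                         rfl }
                counit := by
                  apply NatTrans.ext; funext c; refine ConcreteCategory.hom_ext _ _ (fun x => ?_)
                  rfl
                coassoc := by
                  apply NatTrans.ext; funext c; refine ConcreteCategory.hom_ext _ _ (fun x => ?_)
                  apply Subtype.ext; apply Subtype.ext
                  rfl }, rfl⟩

end ProbeTheory
end

section
/- Let E be a topos with local state classifier (ξ_X : X → Ξ)_{X∈E}, equipped with its canonical meet-semilattice structure making ξ a singularity gauge. Then every non-singular map f : X → Y (i.e., one with ξ_Y ∘ f = ξ_X) is cartesian with respect to every shell (B, β) on E: the naturality square of β at f is a pullback. -/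
open CategoryTheory CategoryTheory.Limits

universe v u

namespace LSC

/-- A subobject classifier: a terminal-based truth map `truth : ⊤ ⟶ Ω` such that every
monomorphism is a pullback of `truth` along a unique characteristic map. -/
structure Classifier (E : Type u) [Category.{v} E] [HasTerminal E] where
  Ω : E
  truth : ⊤_ E ⟶ Ω
  χ : ∀ {U X : E} (m : U ⟶ X), Mono m → (X ⟶ Ω)
  isPullback : ∀ {U X : E} (m : U ⟶ X) (hm : Mono m),
    IsPullback (terminal.from U) m truth (χ m hm)
  uniq : ∀ {U X : E} (m : U ⟶ X) (hm : Mono m) (c : X ⟶ Ω),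
    IsPullback (terminal.from U) m truth c → c = χ m hm

/-- The bijective-on-objects wide subcategory of `E` determined by monomorphisms. -/
structure MonoCat (E : Type u) [Category.{v} E] : Type u where
  obj : E

instance {E : Type u} [Category.{v} E] : Category.{v} (MonoCat E) where
  Hom X Y := {f : X.obj ⟶ Y.obj // Mono f}
  id X := ⟨𝟙 X.obj, inferInstance⟩
  comp f g := ⟨f.1 ≫ g.1, by haveI := f.2; haveI := g.2; exact mono_comp _ _⟩
  id_comp f := Subtype.ext (Category.id_comp f.1)
  comp_id f := Subtype.ext (Category.comp_id f.1)
  assoc f g h := Subtype.ext (Category.assoc f.1 g.1 h.1)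

/-- The inclusion `E_m ⥤ E`. -/
def monoInclusion (E : Type u) [Category.{v} E] : MonoCat E ⥤ E where
  obj X := X.obj
  map f := f.1

universe u₁ v₁

/-- A shell: an idempotent comonad with pointwise monic counit whose naturality
squares at monomorphisms are pullbacks. -/
structure Shell (E : Type u₁) [Category.{v₁} E] where
  G : Comonad E
  idem : ∀ X : E, IsIso (G.δ.app X)
  monic : ∀ X : E, Mono (G.ε.app X)
  cart : ∀ {X Y : E} (m : X ⟶ Y), Mono m →
    IsPullback ((G : E ⥤ E).map m) (G.ε.app X) (G.ε.app Y) m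

/-- in a topos with a local state classifier `(ξ_X : X ⟶ Ξ)` (here: a
colimit cocone `c` over the inclusion of monomorphisms, with the singularity-gauge
property that every shell is classified by a subobject of `Ξ`), every non-singular map
`f` (i.e. `ξ_Y ∘ f = ξ_X`) is cartesian with respect to every shell: the naturality
square of the counit at `f` is a pullback. -/
theorem stmt16 {E : Type u} [Category.{v} E] [HasFiniteLimits E]
    (hcc : Nonempty (@MonoidalClosed E _
      (CartesianMonoidalCategory.ofHasFiniteProducts (C := E)).toMonoidalCategory))
    (Cl : Classifier E)
    (c : Cocone (monoInclusion E)) (hc : IsColimit c)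
    (hgauge : ∀ S : Shell E, ∃ (Z : E) (i : Z ⟶ c.pt), Mono i ∧
      ∀ X : E, ∃ t : (S.G : E ⥤ E).obj X ⟶ Z,
        IsPullback t (S.G.ε.app X) i (c.ι.app ⟨X⟩)) :
    ∀ (S : Shell E) {X Y : E} (f : X ⟶ Y),
      f ≫ c.ι.app ⟨Y⟩ = c.ι.app ⟨X⟩ →
      IsPullback ((S.G : E ⥤ E).map f) (S.G.ε.app X) (S.G.ε.app Y) f := by
  intro S X Y f hf
  obtain ⟨Z, i, hi, ht⟩ := hgauge S
  obtain ⟨tX, hX⟩ := ht X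
  obtain ⟨tY, hY⟩ := ht Y
  have hnat : (S.G : E ⥤ E).map f ≫ S.G.ε.app Y = S.G.ε.app X ≫ f :=
    S.G.ε.naturality f
  have htX : (S.G : E ⥤ E).map f ≫ tY = tX := by
    haveI := hi
    rw [← cancel_mono i, Category.assoc, hY.w, hX.w, ← hf]
    exact (reassoc_of% hnat) _
  have hbig : IsPullback ((S.G : E ⥤ E).map f ≫ tY) (S.G.ε.app X) i
      (f ≫ c.ι.app ⟨Y⟩) := by
    rw [htX, hf]; exact hX
  exact IsPullback.of_right hbig hnat hY

end LSC
end

section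
/- In the presheaf topos of reflexive graphs (presheaves on the full subcategory Δ₁ of nonempty finite ordinals on [0] and [1]), with local state classifier Ξ the reflexive graph with one node and two non-identity loops 'loop' and 'non-loop', and ξ_X sending non-identity loops of X to 'loop' and all other non-identity edges to 'non-loop': a morphism f : X → Y of reflexive graphs is non-singular if and only if f sends non-identity loops to non-identity loops, and edges between distinct nodes to edges between distinct nodes. -/
universe u

namespace RefGraphs

/-- A reflexive graph: nodes, edges with source and target, and a distinguished
identity loop at each node. (Presheaves on `Δ₁`.) -/
structure RefGraph where
  V : Type u
  E : Type u
  src : E → V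
  trg : E → V
  ide : V → E
  src_ide : ∀ v, src (ide v) = v
  trg_ide : ∀ v, trg (ide v) = v

/-- A morphism of reflexive graphs. -/
structure RGHom (X Y : RefGraph) where
  onV : X.V → Y.V
  onE : X.E → Y.E
  src_comm : ∀ e, Y.src (onE e) = onV (X.src e)
  trg_comm : ∀ e, Y.trg (onE e) = onV (X.trg e)
  ide_comm : ∀ v, onE (X.ide v) = Y.ide (onV v)

/-- Composition of morphisms of reflexive graphs. -/
def RGHom.comp {X Y Z : RefGraph} (g : RGHom Y Z) (f : RGHom X Y) : RGHom X Z where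
  onV := g.onV ∘ f.onV
  onE := g.onE ∘ f.onE
  src_comm e := by simp [g.src_comm, f.src_comm]
  trg_comm e := by simp [g.trg_comm, f.trg_comm]
  ide_comm v := by simp [f.ide_comm, g.ide_comm]

/-- An edge is an identity edge if it is the distinguished loop at some node. -/
def IsIdentityEdge (X : RefGraph) (e : X.E) : Prop := ∃ v, e = X.ide v

/-- The edges of the local state classifier `Ξ` of reflexive graphs:
the identity loop, a non-identity loop, and a non-loop. -/
inductive XiE : Type u
  | id | loop | nonloop

/-- The local state classifier `Ξ` of reflexive graphs: one node and two
non-identity loops `loop` and `nonloop`. -/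
def Xi : RefGraph where
  V := PUnit
  E := XiE
  src _ := PUnit.unit
  trg _ := PUnit.unit
  ide _ := XiE.id
  src_ide _ := rfl
  trg_ide _ := rfl

attribute [local instance] Classical.propDecidable

/-- The component `ξ_X : X ⟶ Ξ` of the local state classifier cocone: non-identity
loops go to `loop`, edges between distinct nodes go to `nonloop`. -/
noncomputable def xi (X : RefGraph) : RGHom X Xi where
  onV _ := PUnit.unit
  onE e :=
    if IsIdentityEdge X e then XiE.id
    else if X.src e = X.trg e then XiE.loop else XiE.nonloop
  src_comm _ := rfl
  trg_comm _ := rfl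
  ide_comm v := by
    show (if IsIdentityEdge X (X.ide v) then XiE.id
      else if X.src (X.ide v) = X.trg (X.ide v) then XiE.loop else XiE.nonloop) = XiE.id
    rw [if_pos ⟨v, rfl⟩]

lemma RGHom.ext' {X Y : RefGraph} {f g : RGHom X Y}
    (h1 : f.onV = g.onV) (h2 : f.onE = g.onE) : f = g := by
  cases f; cases g; cases h1; cases h2; rfl

/-- a morphism `f : X ⟶ Y` of reflexive graphs is non-singular
(`ξ_Y ∘ f = ξ_X`) iff it sends non-identity loops to non-identity loops and
edges between distinct nodes to edges between distinct nodes. -/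
theorem stmt18 {X Y : RefGraph} (f : RGHom X Y) :
    (xi Y).comp f = xi X ↔
      ((∀ e : X.E, X.src e = X.trg e → ¬ IsIdentityEdge X e →
          Y.src (f.onE e) = Y.trg (f.onE e) ∧ ¬ IsIdentityEdge Y (f.onE e))
       ∧ (∀ e : X.E, X.src e ≠ X.trg e → Y.src (f.onE e) ≠ Y.trg (f.onE e))) := by
  have key : ∀ e : X.E, ((xi Y).comp f).onE e =
      (if IsIdentityEdge Y (f.onE e) then XiE.id
        else if Y.src (f.onE e) = Y.trg (f.onE e) then XiE.loop else XiE.nonloop) :=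
    fun e => rfl
  constructor
  · intro h
    have hE : ∀ e : X.E, ((xi Y).comp f).onE e = (xi X).onE e := by
      intro e; rw [h]
    constructor
    · intro e hloop hnid
      have := hE e
      rw [key] at this
      simp only [xi, if_neg hnid, if_pos hloop] at this
      by_cases h1 : IsIdentityEdge Y (f.onE e)
      · rw [if_pos h1] at this; exact absurd this (fun h => by have h' : (XiE.id : XiE) = (if IsIdentityEdge X e then XiE.id else if X.src e = X.trg e then XiE.loop else XiE.nonloop : XiE) := h; rw [if_neg hnid, if_pos hloop] at h'; exact XiE.noConfusion h')
      · rw [if_neg h1] at this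
        by_cases h2 : Y.src (f.onE e) = Y.trg (f.onE e)
        · exact ⟨h2, h1⟩
        · rw [if_neg h2] at this; exact absurd this (fun h => by have h' : (XiE.nonloop : XiE) = (if IsIdentityEdge X e then XiE.id else if X.src e = X.trg e then XiE.loop else XiE.nonloop : XiE) := h; rw [if_neg hnid, if_pos hloop] at h'; exact XiE.noConfusion h')
    · intro e hne
      have hnid : ¬ IsIdentityEdge X e := by
        rintro ⟨v, rfl⟩; exact hne (by rw [X.src_ide, X.trg_ide])
      have := hE e
      rw [key] at this
      simp only [xi, if_neg hnid, if_neg hne] at this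
      by_cases h1 : IsIdentityEdge Y (f.onE e)
      · rw [if_pos h1] at this; exact absurd this (fun h => by have h' : (XiE.id : XiE) = (if IsIdentityEdge X e then XiE.id else if X.src e = X.trg e then XiE.loop else XiE.nonloop : XiE) := h; rw [if_neg hnid, if_neg hne] at h'; exact XiE.noConfusion h')
      · rw [if_neg h1] at this
        by_cases h2 : Y.src (f.onE e) = Y.trg (f.onE e)
        · rw [if_pos h2] at this; exact absurd this (fun h => by have h' : (XiE.loop : XiE) = (if IsIdentityEdge X e then XiE.id else if X.src e = X.trg e then XiE.loop else XiE.nonloop : XiE) := h; rw [if_neg hnid, if_neg hne] at h'; exact XiE.noConfusion h')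
        · exact h2
  · rintro ⟨h1, h2⟩
    have hV : ((xi Y).comp f).onV = (xi X).onV := rfl
    have hE : ((xi Y).comp f).onE = (xi X).onE := by
      funext e
      rw [key]
      show _ = (if IsIdentityEdge X e then XiE.id
        else if X.src e = X.trg e then XiE.loop else XiE.nonloop)
      by_cases hid : IsIdentityEdge X e
      · obtain ⟨v, rfl⟩ := hid
        rw [f.ide_comm]
        have hy : IsIdentityEdge Y (Y.ide (f.onV v)) := ⟨f.onV v, rfl⟩
        have hx : IsIdentityEdge X (X.ide v) := ⟨v, rfl⟩
        rw [if_pos hy, if_pos hx]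
      · rw [if_neg hid]
        by_cases hloop : X.src e = X.trg e
        · obtain ⟨hs, hn⟩ := h1 e hloop hid
          rw [if_pos hloop, if_neg hn, if_pos hs]
        · have hne := h2 e hloop
          have hnid : ¬ IsIdentityEdge Y (f.onE e) := by
            rintro ⟨w, hw⟩; rw [hw, Y.src_ide, Y.trg_ide] at hne; exact hne rfl
          rw [if_neg hloop, if_neg hnid, if_neg hne]
    exact RGHom.ext' hV hE

end RefGraphs
end
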